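/- Explicit step-size tuning bound (content of Corollary 2, case of small tuned β). Suppose the error after N steps satisfies r_N ≤ r₀·exp(−a√β·N) + b·σ²·√β + c·Δ²/√β, where √β := ln(max{2, a·r₀·N/(b·σ²)})/(a·N). Then r_N ≤ (b·σ²/(a·N))·(1 + ln(max{2, a·r₀·N/(b·σ²)})) + (a·c·Δ²·N)/ln 2. -/

import Mathlib

/-- Explicit step-size tuning bound (content of Corollary 2, case of small tuned β).
Suppose the error after `N` steps satisfies
`r_N ≤ r₀·exp(−a·√β·N) + b·σ²·√β + c·Δ²/√β`, where
`√β := ln(max{2, a·r₀·N/(b·σ²)})/(a·N)`.  Then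
`r_N ≤ (b·σ²/(a·N))·(1 + ln(max{2, a·r₀·N/(b·σ²)})) + (a·c·Δ²·N)/ln 2`. -/
theorem step_size_tuning_bound
    (rN r0 a b c σ2 Δ2 N : ℝ)
    (hr0 : 0 < r0) (ha : 0 < a) (hb : 0 < b) (hc : 0 ≤ c)
    (hσ2 : 0 < σ2) (hΔ2 : 0 ≤ Δ2) (hN : 0 < N)
    (sqβ : ℝ) (hsqβ : sqβ = Real.log (max 2 (a * r0 * N / (b * σ2))) / (a * N))
    (hrec : rN ≤ r0 * Real.exp (-(a * sqβ * N)) + b * σ2 * sqβ + c * Δ2 / sqβ) :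
    rN ≤ (b * σ2 / (a * N)) * (1 + Real.log (max 2 (a * r0 * N / (b * σ2))))
      + a * c * Δ2 * N / Real.log 2 := by
  set M : ℝ := max 2 (a * r0 * N / (b * σ2)) with hMdef
  have hM2 : (2:ℝ) ≤ M := le_max_left _ _
  have hMpos : (0:ℝ) < M := by linarith
  have hMratio : a * r0 * N / (b * σ2) ≤ M := le_max_right _ _
  set L : ℝ := Real.log M with hLdef
  have hlog2 : (0:ℝ) < Real.log 2 := Real.log_pos (by norm_num)
  have hL2 : Real.log 2 ≤ L := Real.log_le_log (by norm_num) hM2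
  have hLpos : 0 < L := lt_of_lt_of_le hlog2 hL2
  have haN : (0:ℝ) < a * N := mul_pos ha hN
  have hsqpos : 0 < sqβ := by rw [hsqβ]; exact div_pos hLpos haN
  have hexp : a * sqβ * N = L := by
    rw [hsqβ]; field_simp
  have hexpval : Real.exp (-(a * sqβ * N)) = 1 / M := by
    rw [hexp, Real.exp_neg, Real.exp_log hMpos, one_div]
  -- first term
  have h1 : r0 * Real.exp (-(a * sqβ * N)) ≤ b * σ2 / (a * N) := by
    rw [hexpval, mul_one_div, div_le_div_iff₀ hMpos haN]
    rw [div_le_iff₀ (mul_pos hb hσ2)] at hMratio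
    nlinarith
  -- second term
  have h2 : b * σ2 * sqβ = (b * σ2 / (a * N)) * L := by
    rw [hsqβ]; field_simp
  -- third term
  have h3 : c * Δ2 / sqβ ≤ a * c * Δ2 * N / Real.log 2 := by
    rw [hsqβ, div_div_eq_mul_div]
    rw [div_le_div_iff₀ hLpos hlog2]
    have hcd : 0 ≤ c * Δ2 * (a * N) := by positivity
    nlinarith [mul_le_mul_of_nonneg_left hL2 hcd]
  have hfinal : rN ≤ b * σ2 / (a * N) + (b * σ2 / (a * N)) * L
      + a * c * Δ2 * N / Real.log 2 := by
    calc rN ≤ r0 * Real.exp (-(a * sqβ * N)) + b * σ2 * sqβ + c * Δ2 / sqβ := hrec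
    _ ≤ b * σ2 / (a * N) + (b * σ2 / (a * N)) * L + a * c * Δ2 * N / Real.log 2 := by
        rw [h2] at *; linarith
  calc rN ≤ _ := hfinal
  _ = (b * σ2 / (a * N)) * (1 + L) + a * c * Δ2 * N / Real.log 2 := by ring
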